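/- Conversely, if an ultimately periodic word u·v^ω is accepted by a Büchi automaton A, then there exist a state q, an accepting state visited on a cycle, integers m ≥ 0 and p > 0, and a path from an initial state to q reading u·v^m, together with a cycle from q to q reading v^p that visits an accepting state. -/

import Mathlib

/-- A (nondeterministic) Büchi automaton over alphabet `σ` with state space `Q`. -/
structure BuchiAutomaton (σ Q : Type) where
  delta : Q → σ → Q → Prop
  init : Set Q
  acc : Set Q

/-- `ρ` is a run of `A` on the infinite word `w`. -/
def BuchiAutomaton.IsRun {σ Q : Type} (A : BuchiAutomaton σ Q) (w : ℕ → σ) (ρ : ℕ → Q) : Prop :=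
  ρ 0 ∈ A.init ∧ ∀ n, A.delta (ρ n) (w n) (ρ (n + 1))

/-- Accepting run: some accepting state occurs infinitely often. -/
def BuchiAutomaton.IsAcceptingRun {σ Q : Type} (A : BuchiAutomaton σ Q) (w : ℕ → σ)
    (ρ : ℕ → Q) : Prop :=
  A.IsRun w ρ ∧ ∀ N, ∃ n, N ≤ n ∧ ρ n ∈ A.acc

/-- The ω-language accepted by `A`. -/
def BuchiAutomaton.Lang {σ Q : Type} (A : BuchiAutomaton σ Q) : Set (ℕ → σ) :=
  {w | ∃ ρ, A.IsAcceptingRun w ρ}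

/-- An ω-language is ω-regular if it is accepted by some Büchi automaton
with finitely many states. -/
def OmegaRegular {σ : Type} (L : Set (ℕ → σ)) : Prop :=
  ∃ (Q : Type) (_ : Fintype Q) (A : BuchiAutomaton σ Q), A.Lang = L

/-- Finite paths: `A.Steps q₁ u q₂` holds iff there is a path from `q₁` to `q₂` reading `u`. -/
def BuchiAutomaton.Steps {σ Q : Type} (A : BuchiAutomaton σ Q) : Q → List σ → Q → Prop
  | q1, [], q2 => q1 = q2
  | q1, a :: u, q2 => ∃ r, A.delta q1 a r ∧ A.Steps r u q2

/-- Concatenation of a finite word with an infinite word. -/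
def catOmega {σ : Type} (u : List σ) (w : ℕ → σ) : ℕ → σ :=
  fun n => if h : n < u.length then u.get ⟨n, h⟩ else w (n - u.length)

/-- The infinite word `v^ω` (meaningful when `v ≠ []`). -/
def omegaPow {σ : Type} [Inhabited σ] (v : List σ) : ℕ → σ :=
  fun n => v.getD (n % v.length) default

/-- Ultimately periodic words: those of the form `u · v^ω` with `v` nonempty. -/
def UltimatelyPeriodic {σ : Type} [Inhabited σ] (w : ℕ → σ) : Prop :=
  ∃ (u v : List σ), v ≠ [] ∧ w = catOmega u (omegaPow v)

lemma steps_append' {σ Q : Type} (A : BuchiAutomaton σ Q) (x : List σ) :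
    ∀ {q1 q2 q3 : Q} (y : List σ), A.Steps q1 x q2 → A.Steps q2 y q3 →
      A.Steps q1 (x ++ y) q3 := by
  induction x with
  | nil =>
    intro q1 q2 q3 y h1 h2
    have h : q1 = q2 := h1
    subst h
    simpa using h2
  | cons a t ih =>
    intro q1 q2 q3 y h1 h2
    obtain ⟨r, hd, hs⟩ := h1
    exact ⟨r, hd, ih y hs h2⟩

lemma steps_read' {σ Q : Type} (A : BuchiAutomaton σ Q) {w : ℕ → σ} {ρ : ℕ → Q}
    (hρ : ∀ n, A.delta (ρ n) (w n) (ρ (n + 1))) :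
    ∀ (t : List σ) (n : ℕ), (∀ i (h : i < t.length), w (n + i) = t[i]) →
      A.Steps (ρ n) t (ρ (n + t.length)) := by
  intro t
  induction t with
  | nil =>
    intro n _
    show ρ n = ρ (n + 0)
    simp
  | cons a t ih =>
    intro n hw
    refine ⟨ρ (n + 1), ?_, ?_⟩
    · have h0 : w n = a := hw 0 (by simp)
      exact h0 ▸ hρ n
    · have h := ih (n + 1) (fun i hi => by
        have := hw (i + 1) (by simpa using Nat.succ_lt_succ hi)
        simpa [show n + 1 + i = n + (i + 1) by omega] using this)
      have e : n + 1 + t.length = n + (a :: t).length := by simp; omega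
      exact e ▸ h

lemma flat_len' {σ : Type} (v : List σ) (p : ℕ) :
    (List.replicate p v).flatten.length = p * v.length := by
  induction p with
  | zero => simp
  | succ p ih => simp [List.replicate_succ, ih, Nat.succ_mul]; omega

lemma flat_get' {σ : Type} (v : List σ) :
    ∀ (p i : ℕ) (h1 : i < ((List.replicate p v).flatten).length)
      (h2 : i % v.length < v.length),
      ((List.replicate p v).flatten)[i] = v[i % v.length] := by
  intro p
  induction p with
  | zero => intro i h1 h2; simp at h1
  | succ p ih =>
    intro i h1 h2
    have e : (List.replicate (p + 1) v).flatten = v ++ (List.replicate p v).flatten := by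
      rw [List.replicate_succ, List.flatten_cons]
    rw [List.getElem_of_eq e h1]
    rw [e] at h1
    by_cases hc : i < v.length
    · rw [List.getElem_append_left hc]
      congr 1
      exact (Nat.mod_eq_of_lt hc).symm
    · push_neg at hc
      rw [List.getElem_append_right hc]
      have hlt : i - v.length < ((List.replicate p v).flatten).length := by
        simp only [List.length_append] at h1; omega
      rw [ih (i - v.length) hlt (by
        rw [← Nat.mod_eq_sub_mod hc]; exact h2)]
      congr 1
      exact (Nat.mod_eq_sub_mod hc).symm

theorem accepted_ultimately_periodic_yields_lasso {σ Q : Type} [Inhabited σ] [Fintype Q]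
    (A : BuchiAutomaton σ Q) (u v : List σ) (hv : v ≠ [])
    (hacc : catOmega u (omegaPow v) ∈ A.Lang) :
    ∃ (q : Q) (m p : ℕ), 0 < p ∧
      (∃ q₀ ∈ A.init, A.Steps q₀ (u ++ (List.replicate m v).flatten) q) ∧
      ∃ qF ∈ A.acc, ∃ v₁ v₂ : List σ,
        v₁ ++ v₂ = (List.replicate p v).flatten ∧
        A.Steps q v₁ qF ∧ A.Steps qF v₂ q := by
  obtain ⟨ρ, ⟨⟨hinit, hstep⟩, hinf⟩⟩ := hacc
  set w : ℕ → σ := catOmega u (omegaPow v) with hw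
  set L := u.length with hL
  set l := v.length with hl
  have hl0 : 0 < l := List.length_pos_iff.mpr hv
  -- basic facts about w
  have hwlt : ∀ i (h : i < L), w i = u[i] := by
    intro i h
    simp [hw, catOmega, show i < u.length from h]
  have hwge : ∀ i, L ≤ i → ∀ (h2 : (i - L) % l < l), w i = v[(i - L) % l] := by
    intro i h h2
    simp only [hw, catOmega, omegaPow, dif_neg (by omega : ¬ i < u.length)]
    exact List.getD_eq_getElem v default h2
  -- segment of w in the periodic part
  have hwseg : ∀ a i, i < l → w (L + a * l + i) = v[i % l]'(Nat.mod_lt _ hl0) := by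
    intro a i hi
    have hLle : L ≤ L + a * l + i := by omega
    have he : (L + a * l + i - L) % l = i % l := by
      have : L + a * l + i - L = i + a * l := by omega
      rw [this, Nat.add_mul_mod_self_right]
    rw [hwge (L + a * l + i) hLle (by rw [he]; exact Nat.mod_lt _ hl0)]
    congr 1
  -- one period step
  have hv_seg : ∀ a, A.Steps (ρ (L + a * l)) v (ρ (L + (a + 1) * l)) := by
    intro a
    have h := steps_read' A hstep v (L + a * l) (fun i hi => by
      rw [hwseg a i hi]
      congr 1
      exact Nat.mod_eq_of_lt hi)
    have e : L + a * l + v.length = L + (a + 1) * l := by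
      simp only [← hl, Nat.succ_mul]; omega
    exact e ▸ h
  -- repeated periods
  have hrep : ∀ (p a : ℕ),
      A.Steps (ρ (L + a * l)) (List.replicate p v).flatten (ρ (L + (a + p) * l)) := by
    intro p
    induction p with
    | zero => intro a; show ρ _ = ρ _; simp
    | succ p ih =>
      intro a
      rw [List.replicate_succ, List.flatten_cons]
      have h := steps_append' A v (List.replicate p v).flatten (hv_seg a) (ih (a + 1))
      have e : L + (a + 1 + p) * l = L + (a + (p + 1)) * l := by ring_nf
      exact e ▸ h
  -- initial segment
  have hinitpath : ∀ m : ℕ,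
      A.Steps (ρ 0) (u ++ (List.replicate m v).flatten) (ρ (L + m * l)) := by
    intro m
    have h1 : A.Steps (ρ 0) u (ρ L) := by
      have h := steps_read' A hstep u 0 (fun i hi => by simpa using hwlt i hi)
      simpa using h
    have h2 := hrep m 0
    simp only [Nat.zero_mul, Nat.add_zero, Nat.zero_add] at h2
    exact steps_append' A u _ h1 h2
  -- pigeonhole on checkpoints
  set s : ℕ → Q := fun k => ρ (L + k * l) with hs
  obtain ⟨q, hq⟩ := Finite.exists_infinite_fiber s
  have hqinf : (s ⁻¹' {q}).Infinite := Set.infinite_coe_iff.mp hq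
  obtain ⟨k₁, hk₁mem, _⟩ := hqinf.exists_gt 0
  have hk₁ : s k₁ = q := hk₁mem
  obtain ⟨n, hn, hnacc⟩ := hinf (L + k₁ * l)
  obtain ⟨k₂, hk₂mem, hk₂gt⟩ := hqinf.exists_gt n
  have hk₂ : s k₂ = q := hk₂mem
  have hk₁l : k₁ ≤ k₁ * l := Nat.le_mul_of_pos_right k₁ hl0
  have hk₂l : k₂ ≤ k₂ * l := Nat.le_mul_of_pos_right k₂ hl0
  have hk12 : k₁ < k₂ := by omega
  have hnle : n ≤ L + k₂ * l := by omega
  set p := k₂ - k₁ with hp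
  set n₁ := L + k₁ * l with hn₁
  set d := n - n₁ with hd
  set t := p * l with ht
  have htsum : n₁ + t = L + k₂ * l := by
    have : k₁ * l + (k₂ - k₁) * l = k₂ * l := by
      rw [← Nat.add_mul, Nat.add_sub_cancel' hk12.le]
    simp only [hn₁, ht, hp]; omega
  have hdt : d ≤ t := by omega
  have hnd : n = n₁ + d := by omega
  -- words for the lasso
  set v₁ : List σ := List.ofFn (fun i : Fin d => w (n₁ + i)) with hv₁
  set v₂ : List σ := List.ofFn (fun i : Fin (t - d) => w (n + i)) with hv₂
  -- w in the lasso region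
  have hwlasso : ∀ i, i < t → w (n₁ + i) = v[i % l]'(Nat.mod_lt _ hl0) := by
    intro i hi
    have : n₁ + i = L + k₁ * l + i := by simp [hn₁]
    rw [this]
    have hLle : L ≤ L + k₁ * l + i := by omega
    have he : (L + k₁ * l + i - L) % l = i % l := by
      have : L + k₁ * l + i - L = i + k₁ * l := by omega
      rw [this, Nat.add_mul_mod_self_right]
    rw [hwge (L + k₁ * l + i) hLle (by rw [he]; exact Nat.mod_lt _ hl0)]
    congr 1
  refine ⟨ρ n₁, k₁, p, by omega, ⟨ρ 0, hinit, hinitpath k₁⟩, ρ n, hnacc, v₁, v₂, ?_, ?_, ?_⟩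
  · -- v₁ ++ v₂ = flatten
    apply List.ext_getElem
    · simp [hv₁, hv₂, flat_len' v p, ← hl]; omega
    · intro i h₁ h₂
      have hit : i < t := by
        have := flat_len' v p
        rw [this] at h₂; exact lt_of_lt_of_le h₂ (le_of_eq rfl)
      rw [flat_get' v p i h₂ (Nat.mod_lt _ hl0)]
      by_cases hc : i < d
      · rw [List.getElem_append_left (by simpa [hv₁] using hc)]
        rw [List.getElem_ofFn]
        exact hwlasso i hit
      · push_neg at hc
        rw [List.getElem_append_right (by simpa [hv₁] using hc)]
        simp only [hv₁, hv₂, List.length_ofFn, List.getElem_ofFn]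
        have : n + ↑(⟨i - d, by
            simp only [hv₁, List.length_ofFn] at h₁
            simp only [List.length_append, List.length_ofFn] at h₁
            omega⟩ : Fin (t - d)) = n₁ + i := by
          simp only [Fin.val_mk]; omega
        rw [this]
        exact hwlasso i hit
  · -- Steps from q to qF reading v₁
    have h := steps_read' A hstep v₁ n₁ (fun i hi => by
      simp [hv₁])
    have e : n₁ + v₁.length = n := by simp [hv₁]; omega
    exact e ▸ h
  · -- Steps from qF back to q reading v₂
    have h := steps_read' A hstep v₂ n (fun i hi => by
      simp [hv₂])
    have e : n + v₂.length = L + k₂ * l := by simp [hv₂]; omega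
    rw [e] at h
    have hq' : ρ (L + k₂ * l) = ρ n₁ := by
      have : s k₂ = s k₁ := by rw [hk₁, hk₂]
      simpa [hs, hn₁] using this
    exact hq' ▸ h
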